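/- Interchange identity for rank-one shifted kernels: writing 1/(v−u) · (1 − u/z)/(1 − v/z) = 1/(v−u) − 1/(v−z), the kernel K^{(1)}_{k,ℓ}(z^{-1}) defined by the double contour integral ((−1)^{k+ℓ}/(2πi)²)∮_{|u|=ρ}du∮_{|v|=1/ρ}dv (u^ℓ/v^{k+1}) · (1/(v−u)) · ((z−u)/(z−v)) · φ_a(2n,u)/φ_a(2n,v) decomposes as K^{(1)}_{k,ℓ}(z^{-1}) = K^{(1)}_{k,ℓ}(0) + h^{(1)}_k(z^{-1}) g^{(1)}_ℓ(n), a rank-one perturbation in (k,ℓ). -/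

import Mathlib

open Complex MeasureTheory

/-- `φ_a(2n;z) = (1+az)^n (1−a/z)^{n+1}`. -/
noncomputable def phiA (a : ℝ) (n : ℕ) (z : ℂ) : ℂ :=
  (1 + (a : ℂ) * z) ^ n * (1 - (a : ℂ) / z) ^ (n + 1)

/-- `g^{(1)}_ℓ(n) = −(1/2πi)∮_{Γ_0} (−u)^ℓ φ_a(2n;u) du`, the contour a small circle
around `0` (radius `a/2`) not enclosing `a`. -/
noncomputable def gOne (a : ℝ) (n : ℕ) (ℓ : ℤ) : ℂ :=
  -(2 * Real.pi * Complex.I)⁻¹ * ∮ u in C(0, a / 2), (-u) ^ ℓ * phiA a n u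

/-- `g^{(2)}_ℓ(n) = −(1/2πi)∮_{Γ_{0,a}} (−u)^{−ℓ−2} / φ_a(2n;u) du`, the contour a circle
around `0` of radius `(1+a)/2` enclosing `0` and `a`. -/
noncomputable def gTwo (a : ℝ) (n : ℕ) (ℓ : ℤ) : ℂ :=
  -(2 * Real.pi * Complex.I)⁻¹ * ∮ u in C(0, (1 + a) / 2), (-u) ^ (-ℓ - 2) / phiA a n u

/-- The double-contour kernel `K^{(1)}_{k,ℓ}(0)`. -/
noncomputable def KOneZero (a ρ : ℝ) (n : ℕ) (k ℓ : ℤ) : ℂ :=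
  (-1 : ℂ) ^ (k + ℓ) / (2 * Real.pi * Complex.I) ^ 2 *
    ∮ u in C(0, ρ), ∮ v in C(0, ρ⁻¹),
      u ^ ℓ / v ^ (k + 1) * (v - u)⁻¹ * (phiA a n u / phiA a n v)

/-- The shifted double-contour kernel `K^{(1)}_{k,ℓ}(z⁻¹)`, with the extra factor
`(z−u)/(z−v)` in the integrand. -/
noncomputable def KOneShift (a ρ : ℝ) (n : ℕ) (z : ℂ) (k ℓ : ℤ) : ℂ :=
  (-1 : ℂ) ^ (k + ℓ) / (2 * Real.pi * Complex.I) ^ 2 *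
    ∮ u in C(0, ρ), ∮ v in C(0, ρ⁻¹),
      u ^ ℓ / v ^ (k + 1) * (v - u)⁻¹ * ((z - u) / (z - v)) * (phiA a n u / phiA a n v)

/-- `h^{(1)}_k(z⁻¹) = −(1/2πi)∮_{Γ_{0,a}} dv/(v−z) · (−v)^{−k−1}/φ_a(2n;v)`, the contour
a circle of radius `(1+a)/2` enclosing `0` and `a` but not `z`. -/
noncomputable def hOne (a : ℝ) (n : ℕ) (k : ℤ) (z : ℂ) : ℂ :=
  -(2 * Real.pi * Complex.I)⁻¹ *
    ∮ v in C(0, (1 + a) / 2), (v - z)⁻¹ * ((-v) ^ (-k - 1) / phiA a n v)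

section Aux

open Metric Set

lemma phiA_ne_zero' {a : ℝ} (ha0 : 0 < a) {v : ℂ} (h1 : a < ‖v‖)
    (h2 : ‖v‖ < a⁻¹) (n : ℕ) : phiA a n v ≠ 0 := by
  have hv0 : v ≠ 0 := by
    intro h; rw [h] at h1; simp at h1; linarith
  refine mul_ne_zero (pow_ne_zero _ ?_) (pow_ne_zero _ ?_)
  · intro h
    have hav : (a : ℂ) * v = -1 := by linear_combination h
    have habs : ‖(a : ℂ) * v‖ = 1 := by rw [hav]; simp
    rw [norm_mul, Complex.norm_real, Real.norm_eq_abs, abs_of_pos ha0] at habs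
    have hlt : a * ‖v‖ < a * a⁻¹ := mul_lt_mul_of_pos_left h2 ha0
    rw [mul_inv_cancel₀ (ne_of_gt ha0)] at hlt
    linarith
  · intro h
    have hav : (a : ℂ) / v = 1 := by linear_combination -h
    rw [div_eq_one_iff_eq hv0] at hav
    rw [← hav, Complex.norm_real, Real.norm_eq_abs, abs_of_pos ha0] at h1
    linarith

lemma phiA_differentiableAt {a : ℝ} {n : ℕ} {v : ℂ} (hv : v ≠ 0) :
    DifferentiableAt ℂ (phiA a n) v := by
  unfold phiA
  exact (((differentiableAt_const _).add
      ((differentiableAt_const _).mul differentiableAt_id)).pow n).mul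
    (((differentiableAt_const _).sub
      ((differentiableAt_const _).div differentiableAt_id hv)).pow (n + 1))

lemma circleIntegral_add' {f g : ℂ → ℂ} {c : ℂ} {R : ℝ} (hf : CircleIntegrable f c R)
    (hg : CircleIntegrable g c R) :
    (∮ z in C(c, R), (f z + g z)) = (∮ z in C(c, R), f z) + ∮ z in C(c, R), g z := by
  have h := circleIntegral.integral_sub (hf.add hg) hg
  simp only [Pi.add_apply, add_sub_cancel_right] at h
  rw [h]; ring

lemma neg_one_zpow_combine (k ℓ : ℤ) : (-1 : ℂ) ^ (-k - 1) * (-1 : ℂ) ^ ℓ = -(-1 : ℂ) ^ (k + ℓ) := by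
  have h : (-1 : ℂ) ≠ 0 := by norm_num
  have ho : Odd (2 * k + 1) := ⟨k, by ring⟩
  rw [← zpow_add₀ h, show -k - 1 + ℓ = (k + ℓ) + (-(2 * k + 1)) by ring, zpow_add₀ h,
    zpow_neg, ho.neg_one_zpow, inv_neg, inv_one]
  ring

end Aux

/-- Rank-one decomposition of the shifted kernel:
`K^{(1)}_{k,ℓ}(z⁻¹) = K^{(1)}_{k,ℓ}(0) + h^{(1)}_k(z⁻¹) g^{(1)}_ℓ(n)`
for `a < ρ < 1 < 1/ρ < |z| < 1/a`. -/
theorem KOneShift_rank_one (a ρ : ℝ) (ha0 : 0 < a) (haρ : a < ρ) (hρ1 : ρ < 1)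
    (n : ℕ) (z : ℂ) (hz1 : ρ⁻¹ < ‖z‖) (hz2 : ‖z‖ < a⁻¹)
    (k ℓ : ℤ) :
    KOneShift a ρ n z k ℓ = KOneZero a ρ n k ℓ + hOne a n k z * gOne a n ℓ := by
  have hρ0 : 0 < ρ := lt_trans ha0 haρ
  have hρinv0 : (0 : ℝ) < ρ⁻¹ := inv_pos.2 hρ0
  have hρρ : ρ * ρ⁻¹ = 1 := mul_inv_cancel₀ (ne_of_gt hρ0)
  have haa : a * a⁻¹ = 1 := mul_inv_cancel₀ (ne_of_gt ha0)
  have h1ρinv : (1 : ℝ) < ρ⁻¹ := by nlinarith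
  have ha1 : a < 1 := lt_trans haρ hρ1
  have hρinvainv : ρ⁻¹ < a⁻¹ := by nlinarith [mul_pos ha0 hρ0]
  have hmid1 : a < (1 + a) / 2 := by linarith
  have hmid2 : (1 + a) / 2 < 1 := by linarith
  have hmid0 : (0 : ℝ) < (1 + a) / 2 := by linarith
  set F0 : ℂ → ℂ → ℂ :=
    fun u v => u ^ ℓ / v ^ (k + 1) * (v - u)⁻¹ * (phiA a n u / phiA a n v) with hF0
  set G : ℂ → ℂ := fun v => (v - z)⁻¹ * (v ^ (-k - 1) * (phiA a n v)⁻¹) with hG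
  set P : ℂ → ℂ := fun u => u ^ ℓ * phiA a n u with hP
  -- facts about points on / between the circles
  have habs_sphere : ∀ (r : ℝ) (v : ℂ), v ∈ Metric.sphere (0 : ℂ) r → ‖v‖ = r := by
    intro r v hv
    simpa using mem_sphere_zero_iff_norm.mp hv
  have hGdiff : ∀ v : ℂ, (1 + a) / 2 ≤ ‖v‖ → ‖v‖ ≤ ρ⁻¹ →
      DifferentiableAt ℂ G v := by
    intro v hlo hhi
    have hv0 : v ≠ 0 := by
      intro h; rw [h] at hlo; simp at hlo; linarith
    have hφ : phiA a n v ≠ 0 :=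
      phiA_ne_zero' ha0 (lt_of_lt_of_le hmid1 hlo) (lt_of_le_of_lt hhi hρinvainv) n
    have hvz : v - z ≠ 0 := by
      refine sub_ne_zero.2 fun h => ?_
      rw [h] at hhi; linarith
    exact ((differentiableAt_id.sub (differentiableAt_const z)).inv hvz).mul
      ((differentiableAt_zpow.2 (Or.inl hv0)).mul ((phiA_differentiableAt hv0).inv hφ))
  -- contour deformations
  have hdefU : (∮ u in C(0, ρ), P u) = ∮ u in C(0, a / 2), P u := by
    apply circleIntegral_eq_of_differentiable_on_annulus_off_countable (half_pos ha0)
      (by linarith) Set.countable_empty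
    · intro u hu
      have hu0 : u ≠ 0 := by
        intro h
        exact hu.2 (by rw [h]; exact Metric.mem_ball_self (half_pos ha0))
      exact ((differentiableAt_zpow.2 (Or.inl hu0)).mul
        (phiA_differentiableAt hu0)).continuousAt.continuousWithinAt
    · intro u hu
      have hu0 : u ≠ 0 := by
        intro h
        exact hu.1.2 (by rw [h]; exact Metric.mem_closedBall_self (half_pos ha0).le)
      exact (differentiableAt_zpow.2 (Or.inl hu0)).mul (phiA_differentiableAt hu0)
  have hdefV : (∮ v in C(0, ρ⁻¹), G v) = ∮ v in C(0, (1 + a) / 2), G v := by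
    apply circleIntegral_eq_of_differentiable_on_annulus_off_countable hmid0
      (by linarith) Set.countable_empty
    · intro v hv
      have h1 : (1 + a) / 2 ≤ ‖v‖ := by
        have := hv.2
        rw [Metric.mem_ball, Complex.dist_eq, sub_zero] at this
        exact le_of_not_gt this
      have h2 : ‖v‖ ≤ ρ⁻¹ := by
        have := hv.1
        rwa [Metric.mem_closedBall, Complex.dist_eq, sub_zero] at this
      exact (hGdiff v h1 h2).continuousAt.continuousWithinAt
    · intro v hv
      have h1 : (1 + a) / 2 ≤ ‖v‖ := by
        have := hv.1.2
        rw [Metric.mem_closedBall, Complex.dist_eq, sub_zero] at this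
        exact le_of_not_ge this
      have h2 : ‖v‖ ≤ ρ⁻¹ := by
        have := hv.1.1
        rw [Metric.mem_ball, Complex.dist_eq, sub_zero] at this
        exact this.le
      exact hGdiff v h1 h2
  -- facts for `v` on the outer circle
  have hVfacts : ∀ u : ℂ, ‖u‖ = ρ → ∀ v ∈ Metric.sphere (0 : ℂ) ρ⁻¹,
      v ≠ 0 ∧ v - u ≠ 0 ∧ phiA a n v ≠ 0 ∧ z - v ≠ 0 ∧ v - z ≠ 0 := by
    intro u hau v hv
    have habv : ‖v‖ = ρ⁻¹ := habs_sphere _ _ hv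
    have hv0 : v ≠ 0 := by
      intro h; rw [h] at habv; simp at habv; linarith
    have hvu : v - u ≠ 0 := by
      refine sub_ne_zero.2 fun h => ?_
      rw [h, hau] at habv; linarith
    have hφ : phiA a n v ≠ 0 := by
      refine phiA_ne_zero' ha0 ?_ ?_ n <;> rw [habv]
      · linarith
      · exact hρinvainv
    have hzv : z - v ≠ 0 := by
      refine sub_ne_zero.2 fun h => ?_
      rw [← h] at habv; linarith
    exact ⟨hv0, hvu, hφ, hzv, fun h => hzv (by rw [← neg_sub] at h; simpa using neg_eq_zero.mp h)⟩
  -- pointwise splitting of the inner integral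
  have hsplit : ∀ u ∈ Metric.sphere (0 : ℂ) ρ,
      (∮ v in C(0, ρ⁻¹),
          u ^ ℓ / v ^ (k + 1) * (v - u)⁻¹ * ((z - u) / (z - v)) * (phiA a n u / phiA a n v))
        = (∮ v in C(0, ρ⁻¹), F0 u v) + -(∮ v in C(0, ρ⁻¹), G v) * P u := by
    intro u hu
    have hau : ‖u‖ = ρ := habs_sphere _ _ hu
    have hu0 : u ≠ 0 := by
      intro h; rw [h] at hau; simp at hau; linarith
    have hF0cont : ContinuousOn (fun v => F0 u v) (Metric.sphere (0 : ℂ) ρ⁻¹) := by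
      intro v hv
      obtain ⟨hv0, hvu, hφ, hzv, hvz⟩ := hVfacts u hau v hv
      refine ContinuousAt.continuousWithinAt ?_
      simp only [hF0]
      exact ((continuousAt_const.div (continuousAt_zpow₀ v (k + 1) (Or.inl hv0))
          (zpow_ne_zero _ hv0)).mul
        (((continuous_id.sub continuous_const).continuousAt).inv₀ hvu)).mul
        (continuousAt_const.div (phiA_differentiableAt hv0).continuousAt hφ)
    have hGcont : ContinuousOn G (Metric.sphere (0 : ℂ) ρ⁻¹) := by
      intro v hv
      obtain ⟨hv0, hvu, hφ, hzv, hvz⟩ := hVfacts u hau v hv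
      refine ContinuousAt.continuousWithinAt ?_
      simp only [hG]
      exact (((continuous_id.sub continuous_const).continuousAt).inv₀ hvz).mul
        ((continuousAt_zpow₀ v (-k - 1) (Or.inl hv0)).mul
          ((phiA_differentiableAt hv0).continuousAt.inv₀ hφ))
    have hiF0 : CircleIntegrable (fun v => F0 u v) 0 ρ⁻¹ :=
      hF0cont.circleIntegrable hρinv0.le
    have hiG : CircleIntegrable (fun v => -P u * G v) 0 ρ⁻¹ :=
      (continuousOn_const.mul hGcont).circleIntegrable hρinv0.le
    have heq : Set.EqOn
        (fun v => u ^ ℓ / v ^ (k + 1) * (v - u)⁻¹ * ((z - u) / (z - v)) * (phiA a n u / phiA a n v))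
        (fun v => F0 u v + -P u * G v) (Metric.sphere (0 : ℂ) ρ⁻¹) := by
      intro v hv
      obtain ⟨hv0, hvu, hφ, hzv, hvz⟩ := hVfacts u hau v hv
      simp only [hF0, hG, hP]
      rw [show (-k - 1 : ℤ) = -(k + 1) by ring, zpow_neg]
      have hvk : v ^ (k + 1) ≠ 0 := zpow_ne_zero _ hv0
      field_simp
      ring
    rw [circleIntegral.integral_congr hρinv0.le heq, circleIntegral_add' hiF0 hiG,
      circleIntegral.integral_const_mul]
    ring
  -- integrability of the two pieces of the outer integral
  have hInner0Int : CircleIntegrable (fun u => ∮ v in C(0, ρ⁻¹), F0 u v) 0 ρ := by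
    refine Continuous.intervalIntegrable ?_ 0 (2 * Real.pi)
    have hrfl : (fun θ : ℝ => (∮ v in C(0, ρ⁻¹), F0 (circleMap 0 ρ θ) v))
        = fun θ : ℝ => ∫ s in (0 : ℝ)..(2 * Real.pi),
            deriv (circleMap 0 ρ⁻¹) s • F0 (circleMap 0 ρ θ) (circleMap 0 ρ⁻¹ s) := rfl
    show Continuous fun θ : ℝ => (∮ v in C(0, ρ⁻¹), F0 (circleMap 0 ρ θ) v)
    rw [hrfl]
    apply intervalIntegral.continuous_parametric_intervalIntegral_of_continuous'
    -- continuity of the uncurried integrand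
    have hU : Continuous (fun p : ℝ × ℝ => circleMap 0 ρ p.1) :=
      (continuous_circleMap 0 ρ).comp continuous_fst
    have hV : Continuous (fun p : ℝ × ℝ => circleMap 0 ρ⁻¹ p.2) :=
      (continuous_circleMap 0 ρ⁻¹).comp continuous_snd
    have hUne : ∀ p : ℝ × ℝ, circleMap 0 ρ p.1 ≠ 0 := fun p =>
      circleMap_ne_center (ne_of_gt hρ0)
    have hVne : ∀ p : ℝ × ℝ, circleMap 0 ρ⁻¹ p.2 ≠ 0 := fun p =>
      circleMap_ne_center (ne_of_gt hρinv0)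
    have habsU : ∀ p : ℝ × ℝ, ‖circleMap 0 ρ p.1‖ = ρ := fun p => by
      rw [norm_circleMap_zero, abs_of_pos hρ0]
    have habsV : ∀ p : ℝ × ℝ, ‖circleMap 0 ρ⁻¹ p.2‖ = ρ⁻¹ := fun p => by
      rw [norm_circleMap_zero, abs_of_pos hρinv0]
    have hVUne : ∀ p : ℝ × ℝ, circleMap 0 ρ⁻¹ p.2 - circleMap 0 ρ p.1 ≠ 0 := by
      intro p
      refine sub_ne_zero.2 fun h => ?_
      have h2 := congrArg norm h
      rw [habsV p, habsU p] at h2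
      nlinarith
    have hφV : ∀ p : ℝ × ℝ, phiA a n (circleMap 0 ρ⁻¹ p.2) ≠ 0 := by
      intro p
      refine phiA_ne_zero' ha0 ?_ ?_ n <;> rw [habsV p]
      · linarith
      · exact hρinvainv
    have hφUc : Continuous fun p : ℝ × ℝ => phiA a n (circleMap 0 ρ p.1) := by
      unfold phiA
      exact ((continuous_const.add (continuous_const.mul hU)).pow n).mul
        ((continuous_const.sub (continuous_const.div hU hUne)).pow (n + 1))
    have hφVc : Continuous fun p : ℝ × ℝ => phiA a n (circleMap 0 ρ⁻¹ p.2) := by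
      unfold phiA
      exact ((continuous_const.add (continuous_const.mul hV)).pow n).mul
        ((continuous_const.sub (continuous_const.div hV hVne)).pow (n + 1))
    have hderiv : Continuous fun p : ℝ × ℝ => deriv (circleMap 0 ρ⁻¹) p.2 := by
      simp only [deriv_circleMap]
      exact hV.mul continuous_const
    show Continuous fun p : ℝ × ℝ =>
      deriv (circleMap 0 ρ⁻¹) p.2 • F0 (circleMap 0 ρ p.1) (circleMap 0 ρ⁻¹ p.2)
    simp only [hF0, smul_eq_mul]
    exact hderiv.mul ((((hU.zpow₀ ℓ fun p => Or.inl (hUne p)).div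
        (hV.zpow₀ (k + 1) fun p => Or.inl (hVne p)) fun p => zpow_ne_zero _ (hVne p)).mul
      ((hV.sub hU).inv₀ hVUne)).mul (hφUc.div hφVc hφV))
  have hPcont : ContinuousOn P (Metric.sphere (0 : ℂ) ρ) := by
    intro u hu
    have hau : ‖u‖ = ρ := habs_sphere _ _ hu
    have hu0 : u ≠ 0 := by
      intro h; rw [h] at hau; simp at hau; linarith
    refine ContinuousAt.continuousWithinAt ?_
    simp only [hP]
    exact (continuousAt_zpow₀ u ℓ (Or.inl hu0)).mul (phiA_differentiableAt hu0).continuousAt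
  have hcrossInt : CircleIntegrable (fun u => -(∮ v in C(0, ρ⁻¹), G v) * P u) 0 ρ :=
    (continuousOn_const.mul hPcont).circleIntegrable hρ0.le
  -- the outer integral splits
  have houter1 : (∮ u in C(0, ρ), ∮ v in C(0, ρ⁻¹),
        u ^ ℓ / v ^ (k + 1) * (v - u)⁻¹ * ((z - u) / (z - v)) * (phiA a n u / phiA a n v))
      = ∮ u in C(0, ρ), ((∮ v in C(0, ρ⁻¹), F0 u v) + -(∮ v in C(0, ρ⁻¹), G v) * P u) :=
    circleIntegral.integral_congr hρ0.le hsplit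
  have houter2 : (∮ u in C(0, ρ), ((∮ v in C(0, ρ⁻¹), F0 u v) + -(∮ v in C(0, ρ⁻¹), G v) * P u))
      = (∮ u in C(0, ρ), ∮ v in C(0, ρ⁻¹), F0 u v)
        + -(∮ v in C(0, ρ⁻¹), G v) * (∮ u in C(0, ρ), P u) := by
    rw [circleIntegral_add' hInner0Int hcrossInt, circleIntegral.integral_const_mul]
  -- rewriting `gOne` and `hOne`
  have hgOne : (∮ u in C(0, a / 2), (-u) ^ ℓ * phiA a n u)
      = (-1 : ℂ) ^ ℓ * ∮ u in C(0, a / 2), P u := by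
    rw [← circleIntegral.integral_const_mul]
    congr 1
    funext u
    simp only [hP]
    rw [neg_eq_neg_one_mul u, mul_zpow]
    ring
  have hhOne : (∮ v in C(0, (1 + a) / 2), (v - z)⁻¹ * ((-v) ^ (-k - 1) / phiA a n v))
      = (-1 : ℂ) ^ (-k - 1) * ∮ v in C(0, (1 + a) / 2), G v := by
    rw [← circleIntegral.integral_const_mul]
    congr 1
    funext v
    simp only [hG]
    rw [neg_eq_neg_one_mul v, mul_zpow, div_eq_mul_inv]
    ring
  have hc : (2 * (Real.pi : ℂ) * Complex.I) ≠ 0 :=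
    mul_ne_zero (mul_ne_zero two_ne_zero (Complex.ofReal_ne_zero.2 Real.pi_ne_zero))
      Complex.I_ne_zero
  have hprod : hOne a n k z * gOne a n ℓ
      = -(-1 : ℂ) ^ (k + ℓ) * (((2 * (Real.pi : ℂ) * Complex.I)⁻¹) ^ 2 *
          ((∮ v in C(0, (1 + a) / 2), G v) * (∮ u in C(0, a / 2), P u))) := by
    unfold hOne gOne
    rw [hhOne, hgOne, ← neg_one_zpow_combine k ℓ]
    ring
  unfold KOneShift KOneZero
  rw [houter1, houter2, hdefU, hdefV, hprod]
  simp only [hF0]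
  field_simp
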